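/- For every k ≥ 2 and every n ≥ 1, the generalized Fibonacci polynomial F_n lies in the kernel of T_2: (∂/∂t₁)²F_n − Σ_{j=1}^k t_j·(∂/∂t₂)(∂/∂t_j)F_n − 2·(∂/∂t₂)F_n = 0. -/

import Mathlib

open MvPolynomial Finset

/-- The weight coefficient `A_ω(α)` of Theorem 2.1 (for `α ≠ 0`):
`A_ω(α) = multinomial(α) · (Σ α_i ω_i) / (Σ α_i)`. -/
noncomputable def Aw {k : ℕ} (ω : Fin k → ℝ) (α : Fin k → ℕ) : ℝ :=
  (Nat.multinomial Finset.univ α : ℝ) * (∑ i, (α i : ℝ) * ω i) / (∑ i, (α i : ℝ))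

/-- The isobaric degree `Σ_{i=1}^k i·α_i` of an exponent vector. -/
def isoDeg {k : ℕ} (α : Fin k → ℕ) : ℕ := ∑ i, (i.1 + 1) * α i

/-- The (finite) set of exponent vectors of isobaric degree `n`. -/
def wipIndex (k n : ℕ) : Finset (Fin k → ℕ) :=
  (Fintype.piFinset fun _ : Fin k => Finset.range (n + 1)).filter fun α => isoDeg α = n

/-- The weighted isobaric polynomial `P_{n,ω} = Σ_α A_ω(α)·t^α`. -/
noncomputable def WIP (k n : ℕ) (ω : Fin k → ℝ) : MvPolynomial (Fin k) ℝ :=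
  ∑ α ∈ wipIndex k n, MvPolynomial.monomial (Finsupp.equivFunOnFinite.symm α) (Aw ω α)

/-- The operator `T_m(P) = D₁₁P − Σ_j t_j D_{2j}P − m·D₂P`. -/
noncomputable def Tm (k : ℕ) (hk : 2 ≤ k) (m : ℝ) (P : MvPolynomial (Fin k) ℝ) :
    MvPolynomial (Fin k) ℝ :=
  pderiv (⟨0, by omega⟩ : Fin k) (pderiv (⟨0, by omega⟩ : Fin k) P)
    - ∑ j : Fin k, X j * pderiv (⟨1, by omega⟩ : Fin k) (pderiv j P)
    - C m * pderiv (⟨1, by omega⟩ : Fin k) P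

/-- The `j`-th element `γ^{(j)}` of the string generated by `γ`. -/
def strElem (k : ℕ) (hk : 2 ≤ k) (γ : Fin k → ℕ) (j : ℕ) : Fin k → ℕ :=
  fun i => if i = (⟨0, by omega⟩ : Fin k) then γ i + 2 * j
    else if i = (⟨1, by omega⟩ : Fin k) then γ i - j else γ i

/-- The `ω`-weighted string generated by `γ`:
`S_ω(γ) = Σ_{j=0}^{γ₂} A_ω(γ^{(j)})·t^{γ^{(j)}}`. -/
noncomputable def strPoly (k : ℕ) (hk : 2 ≤ k) (ω : Fin k → ℝ) (γ : Fin k → ℕ) :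
    MvPolynomial (Fin k) ℝ :=
  ∑ j ∈ Finset.range (γ (⟨1, by omega⟩ : Fin k) + 1),
    MvPolynomial.monomial (Finsupp.equivFunOnFinite.symm (strElem k hk γ j))
      (Aw ω (strElem k hk γ j))

/-- The generalized Fibonacci polynomial `F_n = Σ_α multinomial(α)·t^α`
(over exponent vectors of isobaric degree `n`); note `F_0 = 1`. -/
noncomputable def Fpoly (k n : ℕ) : MvPolynomial (Fin k) ℝ :=
  ∑ α ∈ wipIndex k n,
    MvPolynomial.monomial (Finsupp.equivFunOnFinite.symm α) (Nat.multinomial Finset.univ α : ℝ)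

lemma coeff_pderiv' {k : ℕ} (i : Fin k) (P : MvPolynomial (Fin k) ℝ) (β : Fin k →₀ ℕ) :
    coeff β (pderiv i P) = ((β i : ℝ) + 1) * coeff (β + Finsupp.single i 1) P := by
  induction P using MvPolynomial.induction_on' with
  | monomial u a =>
    rw [pderiv_monomial, coeff_monomial, coeff_monomial]
    by_cases h : u = β + Finsupp.single i 1
    · have h2 : u - Finsupp.single i 1 = β := by simp [h]
      rw [if_pos h2, if_pos h, h]
      simp [Finsupp.add_apply]
      ring
    · rw [if_neg h, mul_zero]
      by_cases h2 : u - Finsupp.single i 1 = β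
      · by_cases h3 : u i = 0
        · simp [h3]
        · exact absurd ((tsub_add_cancel_of_le (Finsupp.single_le_iff.mpr
            (Nat.one_le_iff_ne_zero.mpr h3))).symm.trans (by rw [h2]) : u = β + Finsupp.single i 1) h
      · rw [if_neg h2]
  | add p q hp hq => simp [map_add, coeff_add, hp, hq]; ring

lemma mem_wipIndex' {k n : ℕ} (α : Fin k → ℕ) : α ∈ wipIndex k n ↔ isoDeg α = n := by
  simp only [wipIndex, Finset.mem_filter, Fintype.mem_piFinset, Finset.mem_range]
  refine ⟨fun h => h.2, fun h => ⟨fun i => ?_, h⟩⟩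
  have h1 : (i.1 + 1) * α i ≤ isoDeg α :=
    Finset.single_le_sum (f := fun j : Fin k => (j.1 + 1) * α j) (fun j _ => Nat.zero_le _)
      (mem_univ i)
  rw [h] at h1
  have h2 : α i ≤ (i.1 + 1) * α i := Nat.le_mul_of_pos_left _ (Nat.succ_pos _)
  omega

lemma coeff_Fpoly' {k n : ℕ} (γ : Fin k →₀ ℕ) :
    coeff γ (Fpoly k n) =
      if isoDeg (⇑γ) = n then (Nat.multinomial Finset.univ ⇑γ : ℝ) else 0 := by
  rw [Fpoly, coeff_sum]
  have key : ∀ α : Fin k → ℕ,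
      coeff γ (monomial (Finsupp.equivFunOnFinite.symm α)
        ((Nat.multinomial Finset.univ α : ℕ) : ℝ))
        = if α = ⇑γ then ((Nat.multinomial Finset.univ α : ℕ) : ℝ) else 0 := by
    intro α
    rw [coeff_monomial]
    congr 1
    simp only [eq_iff_iff]
    exact Equiv.symm_apply_eq _
  simp only [key]
  rw [Finset.sum_ite_eq' (wipIndex k n) (⇑γ) (fun α => ((Nat.multinomial Finset.univ α : ℕ) : ℝ))]
  by_cases h : isoDeg (⇑γ) = n
  · rw [if_pos ((mem_wipIndex' _).mpr h), if_pos h]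
  · rw [if_neg (fun hm => h ((mem_wipIndex' _).mp hm)), if_neg h]

lemma isoDeg_add_single' {k : ℕ} (α : Fin k → ℕ) (i : Fin k) (m : ℕ) :
    isoDeg (α + Pi.single i m : Fin k → ℕ) = isoDeg α + (i.1 + 1) * m := by
  unfold isoDeg
  simp only [Pi.add_apply, mul_add, Finset.sum_add_distrib]
  congr 1
  rw [Finset.sum_eq_single i (fun j _ hj => by simp [Pi.single_eq_of_ne hj]) (by simp)]
  simp

lemma coe_add_single' {k : ℕ} (β : Fin k →₀ ℕ) (i : Fin k) (m : ℕ) :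
    ⇑(β + Finsupp.single i m) = ⇑β + Pi.single i m := by
  ext j
  simp [Finsupp.add_apply, Finsupp.single_apply, Pi.single_apply, eq_comm]

lemma prod_fact_single {k : ℕ} (β : Fin k → ℕ) (i : Fin k) (m : ℕ) :
    ∏ j, Nat.factorial ((β + Pi.single i m : Fin k → ℕ) j)
      = Nat.factorial (β i + m) * ∏ j ∈ univ.erase i, Nat.factorial (β j) := by
  rw [← Finset.mul_prod_erase univ _ (mem_univ i)]
  congr 1
  · simp
  · exact Finset.prod_congr rfl fun j hj => by
      rw [Pi.add_apply, Pi.single_eq_of_ne (Finset.ne_of_mem_erase hj), add_zero]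

lemma sum_add_single {k : ℕ} (β : Fin k → ℕ) (i : Fin k) (m : ℕ) :
    ∑ j, (β + Pi.single i m : Fin k → ℕ) j = (∑ j, β j) + m := by
  simp [Finset.sum_add_distrib]

lemma key_nat {k : ℕ} (i0 i1 : Fin k) (β : Fin k → ℕ) :
    (β i0 + 1) * (β i0 + 2) * Nat.multinomial univ (β + Pi.single i0 2 : Fin k → ℕ)
      = (β i1 + 1) * ((∑ j, β j) + 2)
          * Nat.multinomial univ (β + Pi.single i1 1 : Fin k → ℕ) := by
  have hp : 0 < ∏ j, Nat.factorial (β j) := Finset.prod_pos fun j _ => Nat.factorial_pos _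
  apply Nat.eq_of_mul_eq_mul_right hp
  have e0 : (β i0 + 1) * (β i0 + 2) * Nat.multinomial univ (β + Pi.single i0 2 : Fin k → ℕ)
      * ∏ j, Nat.factorial (β j) = Nat.factorial ((∑ j, β j) + 2) := by
    calc (β i0 + 1) * (β i0 + 2) * Nat.multinomial univ (β + Pi.single i0 2 : Fin k → ℕ)
        * ∏ j, Nat.factorial (β j)
        = (∏ j, Nat.factorial ((β + Pi.single i0 2 : Fin k → ℕ) j))
            * Nat.multinomial univ (β + Pi.single i0 2 : Fin k → ℕ) := by
          rw [prod_fact_single,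
            ← Finset.mul_prod_erase univ (fun j => Nat.factorial (β j)) (mem_univ i0)]
          have : Nat.factorial (β i0 + 2) = (β i0 + 2) * ((β i0 + 1) * Nat.factorial (β i0)) := by
            rw [← Nat.factorial_succ, ← Nat.factorial_succ]
          rw [this]; ring
      _ = Nat.factorial (∑ j, (β + Pi.single i0 2 : Fin k → ℕ) j) := Nat.multinomial_spec _ _
      _ = Nat.factorial ((∑ j, β j) + 2) := by rw [sum_add_single]
  have e1 : (β i1 + 1) * ((∑ j, β j) + 2)
      * Nat.multinomial univ (β + Pi.single i1 1 : Fin k → ℕ)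
      * ∏ j, Nat.factorial (β j) = Nat.factorial ((∑ j, β j) + 2) := by
    calc (β i1 + 1) * ((∑ j, β j) + 2)
        * Nat.multinomial univ (β + Pi.single i1 1 : Fin k → ℕ) * ∏ j, Nat.factorial (β j)
        = ((∑ j, β j) + 2) * ((∏ j, Nat.factorial ((β + Pi.single i1 1 : Fin k → ℕ) j))
            * Nat.multinomial univ (β + Pi.single i1 1 : Fin k → ℕ)) := by
          rw [prod_fact_single,
            ← Finset.mul_prod_erase univ (fun j => Nat.factorial (β j)) (mem_univ i1)]
          have : Nat.factorial (β i1 + 1) = (β i1 + 1) * Nat.factorial (β i1) :=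
            Nat.factorial_succ _
          rw [this]; ring
      _ = ((∑ j, β j) + 2) * Nat.factorial (∑ j, (β + Pi.single i1 1 : Fin k → ℕ) j) := by
          rw [Nat.multinomial_spec]
      _ = ((∑ j, β j) + 2) * Nat.factorial ((∑ j, β j) + 1) := by rw [sum_add_single]
      _ = Nat.factorial ((∑ j, β j) + 2) := (Nat.factorial_succ _).symm
  rw [e0, e1]

lemma coeff_X_mul_pderiv {k : ℕ} (i1 j : Fin k) (F : MvPolynomial (Fin k) ℝ) (β : Fin k →₀ ℕ) :
    coeff β (X j * pderiv i1 (pderiv j F))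
      = (β j : ℝ) * (((β i1 : ℝ) + 1) * coeff (β + Finsupp.single i1 1) F) := by
  classical
  rw [coeff_X_mul']
  by_cases h : j ∈ β.support
  · rw [if_pos h, coeff_pderiv', coeff_pderiv']
    have hβ : 1 ≤ β j := Nat.one_le_iff_ne_zero.mpr (Finsupp.mem_support_iff.mp h)
    have hle : Finsupp.single j 1 ≤ β := Finsupp.single_le_iff.mpr hβ
    have e : β - Finsupp.single j 1 + Finsupp.single i1 1 + Finsupp.single j 1
        = β + Finsupp.single i1 1 := by
      rw [add_right_comm, tsub_add_cancel_of_le hle]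
    rw [e]
    have hnat : ((β - Finsupp.single j 1 : Fin k →₀ ℕ) i1 + 1)
        * ((β - Finsupp.single j 1 + Finsupp.single i1 1 : Fin k →₀ ℕ) j + 1) = β j * (β i1 + 1) := by
      rcases eq_or_ne j i1 with rfl | hji
      · simp only [Finsupp.tsub_apply, Finsupp.add_apply, Finsupp.single_apply, if_pos rfl]
        simp only [if_true]
        rw [Nat.sub_add_cancel hβ]
      · simp only [Finsupp.tsub_apply, Finsupp.add_apply, Finsupp.single_apply,
          if_neg (Ne.symm hji), if_neg hji, Nat.sub_zero, tsub_zero, add_zero, if_true]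
        rw [Nat.sub_add_cancel hβ]
        ring
    calc ((((β - Finsupp.single j 1 : Fin k →₀ ℕ) i1 : ℕ) : ℝ) + 1)
        * (((((β - Finsupp.single j 1 + Finsupp.single i1 1 : Fin k →₀ ℕ) j : ℕ) : ℝ) + 1)
          * coeff (β + Finsupp.single i1 1) F)
        = ((((β - Finsupp.single j 1 : Fin k →₀ ℕ) i1 + 1)
            * ((β - Finsupp.single j 1 + Finsupp.single i1 1 : Fin k →₀ ℕ) j + 1) : ℕ) : ℝ)
          * coeff (β + Finsupp.single i1 1) F := by push_cast; ring
      _ = ((β j * (β i1 + 1) : ℕ) : ℝ) * coeff (β + Finsupp.single i1 1) F := by rw [hnat]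
      _ = (β j : ℝ) * (((β i1 : ℝ) + 1) * coeff (β + Finsupp.single i1 1) F) := by
          push_cast; ring
  · rw [if_neg h]
    have : β j = 0 := Finsupp.notMem_support_iff.mp h
    rw [this]
    simp


/-- For every `k ≥ 2` and `n ≥ 1`, the generalized Fibonacci polynomial `F_n`
lies in the kernel of `T_2`. -/
theorem fibonacci_in_ker_T2 (k : ℕ) (hk : 2 ≤ k) (n : ℕ) (hn : 1 ≤ n) :
    Tm k hk 2 (Fpoly k n) = 0 := by
  classical
  rw [MvPolynomial.eq_zero_iff]
  intro β
  rw [Tm, coeff_sub, coeff_sub, coeff_sum, coeff_C_mul,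
    coeff_pderiv', coeff_pderiv', coeff_pderiv']
  simp only [coeff_X_mul_pderiv]
  set i0 : Fin k := ⟨0, by omega⟩ with hi0
  set i1 : Fin k := ⟨1, by omega⟩ with hi1
  have happ : ((β + Finsupp.single i0 1 : Fin k →₀ ℕ) i0) = β i0 + 1 := by simp
  rw [happ, ← Finset.sum_mul]
  have harg : (⇑β + Pi.single i0 1 + Pi.single i0 1 : Fin k → ℕ) = ⇑β + Pi.single i0 2 := by
    rw [add_assoc, ← Pi.single_add]
  have hc0 : coeff (β + Finsupp.single i0 1 + Finsupp.single i0 1) (Fpoly k n)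
      = if isoDeg (⇑β) + 2 = n
          then ((Nat.multinomial univ (⇑β + Pi.single i0 2 : Fin k → ℕ) : ℕ) : ℝ) else 0 := by
    rw [coeff_Fpoly', coe_add_single', coe_add_single', harg, isoDeg_add_single']
    norm_num
  have hc1 : coeff (β + Finsupp.single i1 1) (Fpoly k n)
      = if isoDeg (⇑β) + 2 = n
          then ((Nat.multinomial univ (⇑β + Pi.single i1 1 : Fin k → ℕ) : ℕ) : ℝ) else 0 := by
    rw [coeff_Fpoly', coe_add_single', isoDeg_add_single']
    norm_num
  rw [hc0, hc1]
  by_cases hiso : isoDeg (⇑β) + 2 = n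
  · rw [if_pos hiso, if_pos hiso]
    have hk2 := congrArg (fun z : ℕ => (z : ℝ)) (key_nat i0 i1 (⇑β))
    push_cast at hk2 ⊢
    linear_combination hk2
  · rw [if_neg hiso, if_neg hiso]
    ring
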